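/- Let K be a global field, 𝔭 a non-archimedean place of K, and φ : P^1 → P^1 a morphism defined over K with good reduction at 𝔭. Let P ∈ P^1(K) be a periodic point for φ with minimal period n. Then: (i) δ_𝔭(φ^i(P), φ^j(P)) = δ_𝔭(φ^{i+k}(P), φ^{j+k}(P)) for all i, j, k ∈ ℕ; and (ii) for all i, j ∈ ℕ with gcd(i − j, n) = 1, δ_𝔭(φ^i(P), φ^j(P)) = δ_𝔭(φ(P), P). -/

import Mathlib

/-!
Common definitions used to formalize the statements of
"Preperiodic points for rational functions defined over a global field
in terms of good reduction" (arXiv:1403.2293).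

* A (normalized, non-archimedean) place of a field `K` is modeled as a surjective
  discrete valuation `v : K → ℤ` (with the junk convention `v 0 = 0`).
* `P1 K` is the projective line over `K`; a point `[x : y]` is `P1.mk x y _`.
* An endomorphism of `P1` defined over `K` is a map `φ : P1 K → P1 K` admitting a
  lift by a pair of binary forms of a common degree `d`, given through their
  coefficient vectors, with nonvanishing resultant (the resultant is defined as
  the determinant of the Sylvester matrix).
* `φ` has good reduction at a place `pl` if it admits a lift whose coefficients
  are `pl`-integral and whose resultant is a `pl`-unit.
* `logDist` is the `𝔭`-adic logarithmic distance `δ_𝔭`; two points of `P1 K` have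
  the same reduction modulo `pl` if and only if `0 < logDist pl P Q`.
* The multiplier of a fixed point `[x:y]` of a map lifted by the forms `(a, b)` of
  degree `d` is computed by the trace formula
  `λ = (∂F/∂x (x,y) + ∂G/∂y (x,y) - d⬝c)/c`, where `c` is the scalar with
  `F(x,y) = c⬝x` and `G(x,y) = c⬝y`.
-/

namespace ArxivPreper

/-- A normalized non-archimedean place of `K`: a surjective discrete valuation
`v : K → ℤ`, with the junk convention `v 0 = 0`. -/
structure Place (K : Type*) [Field K] where
  v : K → ℤ
  v_zero : v 0 = 0
  v_mul : ∀ x y : K, x ≠ 0 → y ≠ 0 → v (x * y) = v x + v y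
  v_add : ∀ x y : K, x ≠ 0 → y ≠ 0 → x + y ≠ 0 → min (v x) (v y) ≤ v (x + y)
  v_surj : ∀ n : ℤ, ∃ x : K, x ≠ 0 ∧ v x = n

namespace Place

variable {K : Type*} [Field K] (pl : Place K)

lemma v_one : pl.v 1 = 0 := by
  have h := pl.v_mul 1 1 one_ne_zero one_ne_zero
  rw [one_mul] at h
  omega

lemma v_neg_one : pl.v (-1 : K) = 0 := by
  have h := pl.v_mul (-1 : K) (-1) (by norm_num) (by norm_num)
  rw [show ((-1 : K) * (-1)) = 1 by ring, pl.v_one] at h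
  omega

lemma v_neg (x : K) : pl.v (-x) = pl.v x := by
  by_cases h : x = 0
  · simp [h]
  · have h1 := pl.v_mul (-1) x (by norm_num) h
    rw [show (-1 : K) * x = -x by ring, pl.v_neg_one] at h1
    omega

lemma v_mul_nonneg {x y : K} (hx : 0 ≤ pl.v x) (hy : 0 ≤ pl.v y) : 0 ≤ pl.v (x * y) := by
  by_cases h1 : x = 0
  · simp [h1, pl.v_zero]
  by_cases h2 : y = 0
  · simp [h2, pl.v_zero]
  rw [pl.v_mul x y h1 h2]
  omega

lemma v_add_nonneg {x y : K} (hx : 0 ≤ pl.v x) (hy : 0 ≤ pl.v y) : 0 ≤ pl.v (x + y) := by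
  by_cases h1 : x = 0
  · simpa [h1] using hy
  by_cases h2 : y = 0
  · simpa [h2] using hx
  by_cases h3 : x + y = 0
  · rw [h3, pl.v_zero]
  exact le_trans (le_min hx hy) (pl.v_add x y h1 h2 h3)

lemma hred_add {a b : K} (ha : a = 0 ∨ 0 < pl.v a) (hb : b = 0 ∨ 0 < pl.v b) :
    a + b = 0 ∨ 0 < pl.v (a + b) := by
  rcases ha with ha | ha
  · subst ha; simpa using hb
  rcases hb with hb | hb
  · subst hb; simpa using Or.inr ha
  by_cases h3 : a + b = 0
  · exact Or.inl h3
  · right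
    have hA : a ≠ 0 := by
      intro h; rw [h, pl.v_zero] at ha; exact absurd ha (lt_irrefl 0)
    have hB : b ≠ 0 := by
      intro h; rw [h, pl.v_zero] at hb; exact absurd hb (lt_irrefl 0)
    exact lt_of_lt_of_le (lt_min ha hb) (pl.v_add a b hA hB h3)

lemma hred_mul {a b : K} (ha : 0 ≤ pl.v a) (hb : b = 0 ∨ 0 < pl.v b) :
    a * b = 0 ∨ 0 < pl.v (a * b) := by
  rcases hb with hb | hb
  · exact Or.inl (by rw [hb, mul_zero])
  by_cases h1 : a = 0
  · exact Or.inl (by rw [h1, zero_mul])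
  by_cases h2 : b = 0
  · exact Or.inl (by rw [h2, mul_zero])
  · right
    rw [pl.v_mul a b h1 h2]
    omega

end Place

/-- `K` is a global field: a number field, or a finite extension of `𝔽_p(t)`. -/
def IsGlobalField (K : Type*) [Field K] : Prop :=
  NumberField K ∨
    ∃ (p : ℕ) (hp : Fact p.Prime),
      letI := hp
      ∃ A : Algebra (RatFunc (ZMod p)) K,
        letI := A
        FiniteDimensional (RatFunc (ZMod p)) K

variable {K : Type*} [Field K]

/-- The projective line over `K`. -/
abbrev P1 (K : Type*) [Field K] := Projectivization K (Fin 2 → K)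

/-- The point `[x : y]` of the projective line. -/
def P1.mk (x y : K) (h : ¬(x = 0 ∧ y = 0)) : P1 K :=
  Projectivization.mk K ![x, y]
    (fun h0 => h ⟨by simpa using congrFun h0 0, by simpa using congrFun h0 1⟩)

/-- The point `[0 : 1]`. -/
def P1zero : P1 K := P1.mk 0 1 (fun h => one_ne_zero h.2)

/-- Value at `(x, y)` of the binary form of degree `d` with coefficient
vector `a` (the coefficient of `x^i y^(d-i)` is `a i`). -/
def formEval (d : ℕ) (a : Fin (d + 1) → K) (x y : K) : K :=
  ∑ i : Fin (d + 1), a i * x ^ (i : ℕ) * y ^ (d - (i : ℕ))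

/-- The Sylvester matrix of two binary forms of degree `d`, given by their
coefficient vectors. -/
def sylvester (d : ℕ) (a b : Fin (d + 1) → K) : Matrix (Fin (d + d)) (Fin (d + d)) K :=
  Matrix.of fun i j =>
    if hi : (i : ℕ) < d then
      if h : (i : ℕ) ≤ (j : ℕ) ∧ (j : ℕ) ≤ (i : ℕ) + d then a ⟨(j : ℕ) - (i : ℕ), by omega⟩
      else 0
    else
      if h : (i : ℕ) - d ≤ (j : ℕ) ∧ (j : ℕ) ≤ (i : ℕ) then
        b ⟨(j : ℕ) - ((i : ℕ) - d), by omega⟩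
      else 0

/-- The resultant of two binary forms of degree `d`: the determinant of their
Sylvester matrix. -/
def resultant (d : ℕ) (a b : Fin (d + 1) → K) : K := (sylvester d a b).det

/-- `(a, b)` is a pair of coefficient vectors of binary forms `F`, `G` of common degree `d`,
with nonzero resultant, such that `φ([x:y]) = [F(x,y) : G(x,y)]` on `P1 K`.  This witnesses
that `φ` is an endomorphism of the projective line defined over `K` (of degree `d`). -/
def IsLift (φ : P1 K → P1 K) (d : ℕ) (a b : Fin (d + 1) → K) : Prop :=
  resultant d a b ≠ 0 ∧
    ∀ (x y : K) (h : ¬(x = 0 ∧ y = 0)),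
      ∃ h' : ¬(formEval d a x y = 0 ∧ formEval d b x y = 0),
        φ (P1.mk x y h) = P1.mk (formEval d a x y) (formEval d b x y) h'

/-- `φ` is an endomorphism of `P1` defined over `K`. -/
def IsEndo (φ : P1 K → P1 K) : Prop := ∃ d a b, IsLift φ d a b

/-- `φ` has good reduction at the place `pl`: it can be written as `[F : G]` with `F`, `G`
binary forms of a common degree whose coefficients are `pl`-integral and whose resultant
is a `pl`-unit. -/
def GoodReduction (pl : Place K) (φ : P1 K → P1 K) : Prop :=
  ∃ (d : ℕ) (a b : Fin (d + 1) → K),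
    IsLift φ d a b ∧ (∀ i, 0 ≤ pl.v (a i)) ∧ (∀ i, 0 ≤ pl.v (b i)) ∧
      pl.v (resultant d a b) = 0

open Classical in
/-- The valuation of a place extended by `v 0 = ⊤`. -/
noncomputable def extv (pl : Place K) (x : K) : WithTop ℤ :=
  if x = 0 then ⊤ else (pl.v x : WithTop ℤ)

open Classical in
/-- `min (v x) (v y)` for a nonzero vector `(x, y)`, ignoring vanishing coordinates. -/
noncomputable def vminVec (pl : Place K) (w : Fin 2 → K) : ℤ :=
  if w 0 = 0 then pl.v (w 1)
  else if w 1 = 0 then pl.v (w 0)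
  else min (pl.v (w 0)) (pl.v (w 1))

/-- The `𝔭`-adic logarithmic distance
`δ_𝔭(P,Q) = v(x₁y₂ - x₂y₁) - min (v x₁) (v y₁) - min (v x₂) (v y₂)`
(computed on fixed representatives; it is independent of the choice of homogeneous
coordinates).  Note `δ_𝔭(P,Q) = ⊤` iff `P = Q`, and two points have the same reduction
modulo `pl` iff `0 < δ_𝔭(P,Q)`. -/
noncomputable def logDist (pl : Place K) (P Q : P1 K) : WithTop ℤ :=
  extv pl (P.rep 0 * Q.rep 1 - Q.rep 0 * P.rep 1) +
    ((-(vminVec pl P.rep) - vminVec pl Q.rep : ℤ) : WithTop ℤ)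

/-- The forward orbit `{φ^n(P) : n ∈ ℕ}` of `P` under `φ`. -/
def orbit (φ : P1 K → P1 K) (P : P1 K) : Set (P1 K) := Set.range fun n : ℕ => φ^[n] P

/-- `P` is preperiodic for `φ`: its forward orbit is finite. -/
def Preperiodic (φ : P1 K → P1 K) (P : P1 K) : Prop := (orbit φ P).Finite

/-- `P` is periodic for `φ`. -/
def PeriodicPt (φ : P1 K → P1 K) (P : P1 K) : Prop := ∃ n : ℕ, 0 < n ∧ φ^[n] P = P

/-- `x` is an `S`-unit of `K`. -/
def IsSUnit (S : Finset (Place K)) (x : K) : Prop :=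
  x ≠ 0 ∧ ∀ pl : Place K, pl ∉ S → pl.v x = 0

/-- The ring of `S`-integers of `K`. -/
def SIntegers (S : Finset (Place K)) : Subring K where
  carrier := {x : K | ∀ pl : Place K, pl ∉ S → 0 ≤ pl.v x}
  zero_mem' := fun pl _ => le_of_eq pl.v_zero.symm
  one_mem' := fun pl _ => le_of_eq pl.v_one.symm
  add_mem' := fun hx hy pl hpl => pl.v_add_nonneg (hx pl hpl) (hy pl hpl)
  mul_mem' := fun hx hy pl hpl => pl.v_mul_nonneg (hx pl hpl) (hy pl hpl)
  neg_mem' := fun {x} hx pl hpl => show 0 ≤ pl.v (-x) by rw [pl.v_neg]; exact hx pl hpl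

/-- The local ring `R_𝔭 = {x : v_𝔭(x) ≥ 0}` at the place `pl`. -/
def integersAt (pl : Place K) : Subring K where
  carrier := {x : K | 0 ≤ pl.v x}
  zero_mem' := le_of_eq pl.v_zero.symm
  one_mem' := le_of_eq pl.v_one.symm
  add_mem' := fun hx hy => pl.v_add_nonneg hx hy
  mul_mem' := fun hx hy => pl.v_mul_nonneg hx hy
  neg_mem' := fun {x} hx => show 0 ≤ pl.v (-x) by rw [pl.v_neg]; exact hx

/-- The maximal ideal `{x : v_𝔭(x) > 0}` of the local ring at `pl`. -/
def maxIdealAt (pl : Place K) : Ideal ↥(integersAt pl) where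
  carrier := {x : ↥(integersAt pl) | (x : K) = 0 ∨ 0 < pl.v (x : K)}
  zero_mem' := Or.inl rfl
  add_mem' := fun {a b} ha hb => by
    have h := pl.hred_add (a := (a : K)) (b := (b : K)) ha hb
    show ((a + b : ↥(integersAt pl)) : K) = 0 ∨ 0 < pl.v ((a + b : ↥(integersAt pl)) : K)
    push_cast
    exact h
  smul_mem' := fun c {x} hx => by
    have h := pl.hred_mul (a := (c : K)) (b := (x : K)) c.2 hx
    show ((c • x : ↥(integersAt pl)) : K) = 0 ∨ 0 < pl.v ((c • x : ↥(integersAt pl)) : K)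
    rw [smul_eq_mul]
    push_cast
    exact h

/-- The residue field `k(𝔭)` at the place `pl`. -/
def Residue (pl : Place K) : Type _ := ↥(integersAt pl) ⧸ maxIdealAt pl

/-- Value at `(x,y)` of `∂F/∂x` for the binary form `F` of degree `d` with coefficient
vector `a`. -/
def formEvalDx (d : ℕ) (a : Fin (d + 1) → K) (x y : K) : K :=
  ∑ i : Fin (d + 1), ((i : ℕ) : K) * a i * x ^ ((i : ℕ) - 1) * y ^ (d - (i : ℕ))

/-- Value at `(x,y)` of `∂G/∂y` for the binary form `G` of degree `d` with coefficient
vector `b`. -/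
def formEvalDy (d : ℕ) (b : Fin (d + 1) → K) (x y : K) : K :=
  ∑ i : Fin (d + 1), ((d - (i : ℕ) : ℕ) : K) * b i * x ^ (i : ℕ) * y ^ (d - (i : ℕ) - 1)

/-- The multiplier `λ_P` at a fixed point `P = [x:y]` of the map lifted by the pair of
degree-`d` binary forms `(a, b)`, where `c` is the scalar with `F(x,y) = c⬝x` and
`G(x,y) = c⬝y`: by the trace formula, `λ = (F_x(x,y) + G_y(x,y) - d⬝c)/c`. -/
noncomputable def multiplier (d : ℕ) (a b : Fin (d + 1) → K) (x y c : K) : K :=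
  (formEvalDx d a x y + formEvalDy d b x y - (d : K) * c) / c

/-! ### Auxiliary lemmas for the proof of Statement 18 -/

section Aux

variable {K : Type*} [Field K] (pl : Place K)

lemma extv_zero : extv pl (0 : K) = ⊤ := by simp [extv]

lemma extv_coe {x : K} (hx : x ≠ 0) : extv pl x = (pl.v x : WithTop ℤ) := by
  simp [extv, hx]

lemma extv_one : extv pl (1 : K) = 0 := by
  rw [extv_coe pl one_ne_zero, pl.v_one]; rfl

lemma extv_mul (x y : K) : extv pl (x * y) = extv pl x + extv pl y := by
  by_cases hx : x = 0
  · simp [hx, extv_zero]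
  by_cases hy : y = 0
  · simp [hy, extv_zero]
  · rw [extv_coe pl hx, extv_coe pl hy, extv_coe pl (mul_ne_zero hx hy),
      pl.v_mul x y hx hy, WithTop.coe_add]

lemma extv_neg (x : K) : extv pl (-x) = extv pl x := by
  by_cases hx : x = 0
  · simp [hx, extv_zero]
  · rw [extv_coe pl (neg_ne_zero.2 hx), extv_coe pl hx, pl.v_neg]

lemma extv_nonneg {x : K} (h : 0 ≤ pl.v x) : 0 ≤ extv pl x := by
  by_cases hx : x = 0
  · rw [hx, extv_zero]; exact le_top
  · rw [extv_coe pl hx]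
    exact_mod_cast h

lemma extv_min_le_add (x y : K) : min (extv pl x) (extv pl y) ≤ extv pl (x + y) := by
  by_cases hx : x = 0
  · simp [hx]
  by_cases hy : y = 0
  · simp [hy]
  by_cases hxy : x + y = 0
  · rw [hxy, extv_zero]; exact le_top
  · rw [extv_coe pl hx, extv_coe pl hy, extv_coe pl hxy, ← WithTop.coe_min,
      WithTop.coe_le_coe]
    exact pl.v_add x y hx hy hxy

lemma extv_sum_le {ι : Type*} (s : Finset ι) (f : ι → K) {c : WithTop ℤ}
    (h : ∀ i ∈ s, c ≤ extv pl (f i)) : c ≤ extv pl (∑ i ∈ s, f i) :=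
  Finset.sum_induction f (fun t => c ≤ extv pl t)
    (fun u v hu hv => le_trans (le_min hu hv) (extv_min_le_add pl u v))
    (by show c ≤ extv pl 0; rw [extv_zero]; exact le_top) h

lemma extv_prod_nonneg {ι : Type*} (s : Finset ι) (f : ι → K)
    (h : ∀ i ∈ s, 0 ≤ extv pl (f i)) : 0 ≤ extv pl (∏ i ∈ s, f i) :=
  Finset.prod_induction f (fun t => 0 ≤ extv pl t)
    (fun u v hu hv => by show 0 ≤ extv pl (u * v); rw [extv_mul]; exact add_nonneg hu hv)
    (by show 0 ≤ extv pl 1; rw [extv_one]) h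

lemma extv_pow_nonneg {x : K} (h : 0 ≤ extv pl x) (m : ℕ) : 0 ≤ extv pl (x ^ m) := by
  induction m with
  | zero => rw [pow_zero, extv_one]
  | succ k ih => rw [pow_succ, extv_mul]; exact add_nonneg ih h

lemma extv_pow_zero {x : K} (h : extv pl x = 0) (m : ℕ) : extv pl (x ^ m) = 0 := by
  induction m with
  | zero => rw [pow_zero, extv_one]
  | succ k ih => rw [pow_succ, extv_mul, ih, h, add_zero]

/-- The logarithmic distance computed on a given pair of coordinate vectors. -/
noncomputable def Dd (u w : Fin 2 → K) : WithTop ℤ :=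
  extv pl (u 0 * w 1 - w 0 * u 1) +
    ((-(vminVec pl u) - vminVec pl w : ℤ) : WithTop ℤ)

lemma logDist_eq_Dd (P Q : P1 K) : logDist pl P Q = Dd pl P.rep Q.rep := rfl

lemma vec_ne_zero {x y : K} (h : ¬(x = 0 ∧ y = 0)) : (![x, y] : Fin 2 → K) ≠ 0 :=
  fun h0 => h ⟨by simpa using congrFun h0 0, by simpa using congrFun h0 1⟩

lemma vminVec_coe {u : Fin 2 → K} (h : ¬(u 0 = 0 ∧ u 1 = 0)) :
    ((vminVec pl u : ℤ) : WithTop ℤ) = min (extv pl (u 0)) (extv pl (u 1)) := by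
  by_cases h0 : u 0 = 0
  · have h1 : u 1 ≠ 0 := fun hh => h ⟨h0, hh⟩
    simp [vminVec, h0, extv_zero, extv_coe pl h1]
  · by_cases h1 : u 1 = 0
    · simp [vminVec, h0, h1, extv_zero, extv_coe pl h0]
    · simp [vminVec, h0, h1, extv_coe pl h0, extv_coe pl h1, WithTop.coe_min]

lemma vminVec_smul {u : Fin 2 → K} (hu : ¬(u 0 = 0 ∧ u 1 = 0)) {c : K} (hc : c ≠ 0) :
    vminVec pl (c • u) = pl.v c + vminVec pl u := by
  have h0 : (c • u) 0 = c * u 0 := rfl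
  have h1 : (c • u) 1 = c * u 1 := rfl
  by_cases hu0 : u 0 = 0
  · have hu1 : u 1 ≠ 0 := fun hh => hu ⟨hu0, hh⟩
    simp [vminVec, h0, h1, hu0, hu1, hc, pl.v_mul c (u 1) hc hu1]
  · by_cases hu1 : u 1 = 0
    · simp [vminVec, h0, h1, hu0, hu1, hc, pl.v_mul c (u 0) hc hu0]
    · simp only [vminVec, h0, h1, mul_eq_zero, hc, hu0, hu1, false_or, if_false,
        pl.v_mul c (u 0) hc hu0, pl.v_mul c (u 1) hc hu1]
      omega

lemma Dd_comm (u w : Fin 2 → K) : Dd pl u w = Dd pl w u := by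
  unfold Dd
  rw [show w 0 * u 1 - u 0 * w 1 = -(u 0 * w 1 - w 0 * u 1) by ring, extv_neg]
  congr 1
  · rw [WithTop.coe_eq_coe]; ring

private lemma add_coe_cancel (A : WithTop ℤ) (m z w : ℤ) :
    ((m : WithTop ℤ) + A) + ((-(m + z) - w : ℤ) : WithTop ℤ) =
      A + ((-z - w : ℤ) : WithTop ℤ) := by
  induction A using WithTop.recTopCoe with
  | top => simp
  | coe a =>
      rw [← WithTop.coe_add, ← WithTop.coe_add, ← WithTop.coe_add, WithTop.coe_eq_coe]
      ring

lemma Dd_smul_left {u : Fin 2 → K} (w : Fin 2 → K) (hu : ¬(u 0 = 0 ∧ u 1 = 0))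
    {c : K} (hc : c ≠ 0) : Dd pl (c • u) w = Dd pl u w := by
  have hcross : (c • u) 0 * w 1 - w 0 * (c • u) 1 = c * (u 0 * w 1 - w 0 * u 1) := by
    show c * u 0 * w 1 - w 0 * (c * u 1) = _; ring
  unfold Dd
  rw [hcross, extv_mul, vminVec_smul pl hu hc, extv_coe pl hc]
  exact add_coe_cancel _ _ _ _

lemma Dd_norm {u w : Fin 2 → K} (hu : vminVec pl u = 0) (hw : vminVec pl w = 0) :
    Dd pl u w = extv pl (u 0 * w 1 - w 0 * u 1) := by
  unfold Dd
  rw [hu, hw]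
  norm_num

lemma P1.mk_eq_mk (x y : K) (h : ¬(x = 0 ∧ y = 0)) :
    P1.mk x y h = Projectivization.mk K ![x, y] (vec_ne_zero h) := rfl

lemma logDist_mk (x1 y1 x2 y2 : K) (h1 : ¬(x1 = 0 ∧ y1 = 0)) (h2 : ¬(x2 = 0 ∧ y2 = 0)) :
    logDist pl (P1.mk x1 y1 h1) (P1.mk x2 y2 h2) = Dd pl ![x1, y1] ![x2, y2] := by
  obtain ⟨c1, hc1⟩ := Projectivization.exists_smul_eq_mk_rep K ![x1, y1] (vec_ne_zero h1)
  obtain ⟨c2, hc2⟩ := Projectivization.exists_smul_eq_mk_rep K ![x2, y2] (vec_ne_zero h2)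
  have e1 : (P1.mk x1 y1 h1).rep = (c1 : K) • ![x1, y1] := by
    rw [P1.mk_eq_mk, ← hc1, Units.smul_def]
  have e2 : (P1.mk x2 y2 h2).rep = (c2 : K) • ![x2, y2] := by
    rw [P1.mk_eq_mk, ← hc2, Units.smul_def]
  have hv1 : ¬((![x1, y1] : Fin 2 → K) 0 = 0 ∧ (![x1, y1] : Fin 2 → K) 1 = 0) := by
    simpa using h1
  have hv2 : ¬((![x2, y2] : Fin 2 → K) 0 = 0 ∧ (![x2, y2] : Fin 2 → K) 1 = 0) := by
    simpa using h2
  rw [logDist_eq_Dd, e1, e2, Dd_smul_left pl _ hv1 c1.ne_zero, Dd_comm,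
    Dd_smul_left pl _ hv2 c2.ne_zero, Dd_comm]

lemma logDist_comm (P Q : P1 K) : logDist pl P Q = logDist pl Q P := by
  rw [logDist_eq_Dd, logDist_eq_Dd, Dd_comm]

lemma logDist_self (P : P1 K) : logDist pl P P = ⊤ := by
  unfold logDist
  rw [sub_self, show extv pl (0 : K) = ⊤ from extv_zero pl, WithTop.top_add]

lemma exists_norm (P : P1 K) :
    ∃ (x y : K) (h : ¬(x = 0 ∧ y = 0)), P = P1.mk x y h ∧ vminVec pl ![x, y] = 0 := by
  have hu : P.rep ≠ 0 := P.rep_nonzero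
  have hu0 : ¬(P.rep 0 = 0 ∧ P.rep 1 = 0) := by
    rintro ⟨h0, h1⟩
    exact hu (funext fun i => by fin_cases i <;> assumption)
  obtain ⟨c, hc, hvc⟩ := pl.v_surj (-(vminVec pl P.rep))
  have hmul : ¬(c * P.rep 0 = 0 ∧ c * P.rep 1 = 0) := by
    rintro ⟨h0, h1⟩
    exact hu0 ⟨by rcases mul_eq_zero.1 h0 with h | h; exact absurd h hc; exact h,
      by rcases mul_eq_zero.1 h1 with h | h; exact absurd h hc; exact h⟩
  refine ⟨c * P.rep 0, c * P.rep 1, hmul, ?_, ?_⟩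
  · have hveq : (![c * P.rep 0, c * P.rep 1] : Fin 2 → K) = c • P.rep := by
      funext i; fin_cases i <;> rfl
    rw [P1.mk_eq_mk]
    have : Projectivization.mk K ![c * P.rep 0, c * P.rep 1] (vec_ne_zero hmul) =
        Projectivization.mk K P.rep P.rep_nonzero := by
      rw [Projectivization.mk_eq_mk_iff']
      exact ⟨c, hveq.symm⟩
    rw [this, Projectivization.mk_rep]
  · have hveq : (![c * P.rep 0, c * P.rep 1] : Fin 2 → K) = c • P.rep := by
      funext i; fin_cases i <;> rfl
    rw [hveq, vminVec_smul pl hu0 hc, hvc]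
    ring

lemma norm_unpack {x y : K} (h : ¬(x = 0 ∧ y = 0)) (hm : vminVec pl ![x, y] = 0) :
    0 ≤ extv pl x ∧ 0 ≤ extv pl y ∧ (extv pl x = 0 ∨ extv pl y = 0) := by
  have hcoe := vminVec_coe pl (u := ![x, y]) (by simpa using h)
  rw [hm] at hcoe
  simp only [Matrix.cons_val_zero, Matrix.cons_val_one, Matrix.head_cons] at hcoe
  have h0 : min (extv pl x) (extv pl y) = 0 := by rw [← hcoe]; rfl
  rcases min_eq_iff.1 h0 with ⟨hx, hy⟩ | ⟨hy, hx⟩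
  · exact ⟨le_of_eq hx.symm, hx ▸ hy, Or.inl hx⟩
  · exact ⟨hy ▸ hx, le_of_eq hy.symm, Or.inr hy⟩

lemma formEval_range (d : ℕ) (c : Fin (d + 1) → K) (x y : K) :
    formEval d c x y = ∑ j ∈ Finset.range (d + 1),
      (if h : j < d + 1 then c ⟨j, h⟩ else 0) * x ^ j * y ^ (d - j) := by
  rw [formEval,
    ← Fin.sum_univ_eq_sum_range
      (fun j => (if h : j < d + 1 then c ⟨j, h⟩ else 0) * x ^ j * y ^ (d - j)) (d + 1)]
  apply Finset.sum_congr rfl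
  intro i _
  rw [dif_pos i.isLt]

lemma formEval_nonneg (d : ℕ) (c : Fin (d + 1) → K) {x y : K}
    (hc : ∀ i, 0 ≤ pl.v (c i)) (hx : 0 ≤ extv pl x) (hy : 0 ≤ extv pl y) :
    0 ≤ extv pl (formEval d c x y) := by
  rw [formEval]
  apply extv_sum_le
  intro i _
  rw [extv_mul, extv_mul]
  exact add_nonneg (add_nonneg (extv_nonneg pl (hc i)) (extv_pow_nonneg pl hx _))
    (extv_pow_nonneg pl hy _)

lemma sum_window (d E : ℕ) (c : Fin (d + 1) → K) (x y : K) (i0 : ℕ) (hE : i0 + d ≤ E) :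
    ∑ j ∈ Finset.range (E + 1),
      (if h : i0 ≤ j ∧ j ≤ i0 + d then c ⟨j - i0, by omega⟩ else 0) * (x ^ j * y ^ (E - j))
      = x ^ i0 * y ^ (E - i0 - d) * formEval d c x y := by
  have h1 : ∑ j ∈ Finset.range (E + 1),
      (if h : i0 ≤ j ∧ j ≤ i0 + d then c ⟨j - i0, by omega⟩ else 0) * (x ^ j * y ^ (E - j))
      = ∑ j ∈ Finset.Icc i0 (i0 + d),
      (if h : i0 ≤ j ∧ j ≤ i0 + d then c ⟨j - i0, by omega⟩ else 0) * (x ^ j * y ^ (E - j)) := by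
    refine (Finset.sum_subset ?_ ?_).symm
    · intro j hj
      rw [Finset.mem_Icc] at hj
      rw [Finset.mem_range]
      omega
    · intro j _ hj
      rw [Finset.mem_Icc] at hj
      rw [dif_neg hj, zero_mul]
  rw [h1, ← Finset.Ico_add_one_right_eq_Icc, Finset.sum_Ico_eq_sum_range,
    show i0 + d + 1 - i0 = d + 1 by omega, formEval_range, Finset.mul_sum]
  apply Finset.sum_congr rfl
  intro k hk
  rw [Finset.mem_range] at hk
  rw [dif_pos (show i0 ≤ i0 + k ∧ i0 + k ≤ i0 + d by omega), dif_pos hk]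
  have hfk : (⟨i0 + k - i0, by omega⟩ : Fin (d + 1)) = ⟨k, hk⟩ := by
    apply Fin.ext; simp
  rw [hfk, pow_add, show E - (i0 + k) = (E - i0 - d) + (d - k) by omega, pow_add]
  ring

lemma sylvester_mulVec (d : ℕ) (a b : Fin (d + 1) → K) (x y : K) (i : Fin (d + d)) :
    (sylvester d a b).mulVec (fun j : Fin (d + d) => x ^ (j : ℕ) * y ^ (d + d - 1 - (j : ℕ))) i
      = if (i : ℕ) < d then x ^ (i : ℕ) * y ^ (d - 1 - (i : ℕ)) * formEval d a x y
        else x ^ ((i : ℕ) - d) * y ^ (d + d - 1 - (i : ℕ)) * formEval d b x y := by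
  have hd : 1 ≤ d := by have := i.isLt; omega
  rw [Matrix.mulVec, dotProduct]
  by_cases hi : (i : ℕ) < d
  · rw [if_pos hi]
    have hcongr : ∀ j : Fin (d + d),
        sylvester d a b i j * (x ^ (j : ℕ) * y ^ (d + d - 1 - (j : ℕ))) =
        (fun jn : ℕ => (if h : (i : ℕ) ≤ jn ∧ jn ≤ (i : ℕ) + d then
            a ⟨jn - (i : ℕ), by omega⟩ else 0) * (x ^ jn * y ^ (d + d - 1 - jn))) (j : ℕ) := by
      intro j
      simp only [sylvester, Matrix.of_apply, dif_pos hi]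
    rw [Finset.sum_congr rfl (fun j _ => hcongr j),
      Fin.sum_univ_eq_sum_range (fun jn => (if h : (i : ℕ) ≤ jn ∧ jn ≤ (i : ℕ) + d then
        a ⟨jn - (i : ℕ), by omega⟩ else 0) * (x ^ jn * y ^ (d + d - 1 - jn))) (d + d),
      show Finset.range (d + d) = Finset.range ((d + d - 1) + 1) by
        rw [Nat.sub_add_cancel (by omega)],
      sum_window d (d + d - 1) a x y (i : ℕ) (by omega),
      show d + d - 1 - (i : ℕ) - d = d - 1 - (i : ℕ) by omega]
  · rw [if_neg hi]
    have hcongr : ∀ j : Fin (d + d),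
        sylvester d a b i j * (x ^ (j : ℕ) * y ^ (d + d - 1 - (j : ℕ))) =
        (fun jn : ℕ => (if h : (i : ℕ) - d ≤ jn ∧ jn ≤ ((i : ℕ) - d) + d then
            b ⟨jn - ((i : ℕ) - d), by omega⟩ else 0) * (x ^ jn * y ^ (d + d - 1 - jn))) (j : ℕ) := by
      intro j
      simp only [sylvester, Matrix.of_apply, dif_neg hi]
      have hid : (i : ℕ) - d + d = (i : ℕ) := by omega
      by_cases hc : (i : ℕ) - d ≤ (j : ℕ) ∧ (j : ℕ) ≤ (i : ℕ)
      · rw [dif_pos hc, dif_pos (by omega : (i : ℕ) - d ≤ (j : ℕ) ∧ (j : ℕ) ≤ (i : ℕ) - d + d)]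
      · rw [dif_neg hc, dif_neg (by omega : ¬((i : ℕ) - d ≤ (j : ℕ) ∧ (j : ℕ) ≤ (i : ℕ) - d + d))]
    rw [Finset.sum_congr rfl (fun j _ => hcongr j),
      Fin.sum_univ_eq_sum_range (fun jn => (if h : (i : ℕ) - d ≤ jn ∧ jn ≤ ((i : ℕ) - d) + d then
        b ⟨jn - ((i : ℕ) - d), by omega⟩ else 0) * (x ^ jn * y ^ (d + d - 1 - jn))) (d + d),
      show Finset.range (d + d) = Finset.range ((d + d - 1) + 1) by
        rw [Nat.sub_add_cancel (by omega)],
      sum_window d (d + d - 1) b x y ((i : ℕ) - d) (by omega),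
      show d + d - 1 - ((i : ℕ) - d) - d = d + d - 1 - (i : ℕ) by omega]

lemma sylvester_entry_nonneg (d : ℕ) (a b : Fin (d + 1) → K)
    (ha : ∀ i, 0 ≤ pl.v (a i)) (hb : ∀ i, 0 ≤ pl.v (b i)) (i j : Fin (d + d)) :
    0 ≤ extv pl (sylvester d a b i j) := by
  simp only [sylvester, Matrix.of_apply]
  split_ifs
  · exact extv_nonneg pl (ha _)
  · rw [extv_zero]; exact le_top
  · exact extv_nonneg pl (hb _)
  · rw [extv_zero]; exact le_top

lemma det_nonneg {m : ℕ} (N : Matrix (Fin m) (Fin m) K)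
    (h : ∀ i j, 0 ≤ extv pl (N i j)) : 0 ≤ extv pl N.det := by
  rw [Matrix.det_apply']
  apply extv_sum_le
  intro σ _
  rw [extv_mul]
  have h1 : 0 ≤ extv pl (((Equiv.Perm.sign σ : ℤ) : K)) := by
    rcases Int.units_eq_one_or (Equiv.Perm.sign σ) with hs | hs <;> rw [hs]
    · simp only [Units.val_one, Int.cast_one]
      rw [extv_one]
    · simp only [Units.val_neg, Units.val_one, Int.cast_neg, Int.cast_one]
      rw [extv_neg, extv_one]
  refine add_nonneg h1 (extv_prod_nonneg pl _ _ fun i _ => h _ _)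

lemma adjugate_nonneg (d : ℕ) (a b : Fin (d + 1) → K)
    (ha : ∀ i, 0 ≤ pl.v (a i)) (hb : ∀ i, 0 ≤ pl.v (b i)) (i j : Fin (d + d)) :
    0 ≤ extv pl ((sylvester d a b).adjugate i j) := by
  rw [Matrix.adjugate_apply]
  apply det_nonneg
  intro k l
  rw [Matrix.updateRow_apply]
  split_ifs
  · rw [Pi.single_apply]
    split_ifs
    · rw [extv_one]
    · rw [extv_zero]; exact le_top
  · exact sylvester_entry_nonneg pl d a b ha hb k l

lemma res_min_le (d : ℕ) (hd : 1 ≤ d) (a b : Fin (d + 1) → K)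
    (ha : ∀ i, 0 ≤ pl.v (a i)) (hb : ∀ i, 0 ≤ pl.v (b i))
    (hresne : resultant d a b ≠ 0) (hres : pl.v (resultant d a b) = 0)
    {x y : K} (hx : 0 ≤ extv pl x) (hy : 0 ≤ extv pl y)
    (hxy0 : extv pl x = 0 ∨ extv pl y = 0) :
    min (extv pl (formEval d a x y)) (extv pl (formEval d b x y)) ≤ 0 := by
  set F := formEval d a x y with hF
  set G := formEval d b x y with hG
  set M := sylvester d a b with hM
  set w : Fin (d + d) → K := fun j => x ^ (j : ℕ) * y ^ (d + d - 1 - (j : ℕ)) with hw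
  have key : M.det • w = (M.adjugate).mulVec (M.mulVec w) := by
    rw [Matrix.mulVec_mulVec, Matrix.adjugate_mul, Matrix.smul_mulVec,
      Matrix.one_mulVec]
  have hrhs : ∀ jj : Fin (d + d),
      min (extv pl F) (extv pl G) ≤ extv pl ((M.adjugate).mulVec (M.mulVec w) jj) := by
    intro jj
    rw [Matrix.mulVec, dotProduct]
    apply extv_sum_le
    intro i _
    rw [extv_mul, sylvester_mulVec d a b x y i]
    split_ifs
    · rw [extv_mul, extv_mul]
      calc min (extv pl F) (extv pl G) ≤ extv pl F := min_le_left _ _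
        _ ≤ (extv pl (x ^ (i : ℕ)) + extv pl (y ^ (d - 1 - (i : ℕ)))) + extv pl F :=
            le_add_of_nonneg_left (add_nonneg (extv_pow_nonneg pl hx _) (extv_pow_nonneg pl hy _))
        _ ≤ extv pl (M.adjugate jj i) + ((extv pl (x ^ (i : ℕ)) + extv pl (y ^ (d - 1 - (i : ℕ)))) + extv pl F) :=
            le_add_of_nonneg_left (adjugate_nonneg pl d a b ha hb jj i)
    · rw [extv_mul, extv_mul]
      calc min (extv pl F) (extv pl G) ≤ extv pl G := min_le_right _ _
        _ ≤ (extv pl (x ^ ((i : ℕ) - d)) + extv pl (y ^ (d + d - 1 - (i : ℕ)))) + extv pl G :=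
            le_add_of_nonneg_left (add_nonneg (extv_pow_nonneg pl hx _) (extv_pow_nonneg pl hy _))
        _ ≤ extv pl (M.adjugate jj i) + ((extv pl (x ^ ((i : ℕ) - d)) + extv pl (y ^ (d + d - 1 - (i : ℕ)))) + extv pl G) :=
            le_add_of_nonneg_left (adjugate_nonneg pl d a b ha hb jj i)
  have hdet : extv pl M.det = 0 := by
    rw [hM, show (sylvester d a b).det = resultant d a b from rfl, extv_coe pl hresne, hres]
    rfl
  rcases hxy0 with h0 | h0
  · have hj : d + d - 1 < d + d := by omega
    have e := congrFun key ⟨d + d - 1, hj⟩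
    have hlhs : extv pl ((M.det • w) ⟨d + d - 1, hj⟩) = 0 := by
      have : (M.det • w) ⟨d + d - 1, hj⟩ = M.det * (x ^ (d + d - 1) * y ^ (d + d - 1 - (d + d - 1))) := rfl
      rw [this, Nat.sub_self, pow_zero, mul_one, extv_mul, hdet, extv_pow_zero pl h0, add_zero]
    calc min (extv pl F) (extv pl G)
        ≤ extv pl ((M.adjugate).mulVec (M.mulVec w) ⟨d + d - 1, hj⟩) := hrhs _
      _ = extv pl ((M.det • w) ⟨d + d - 1, hj⟩) := by rw [e]
      _ = 0 := hlhs
  · have hj : 0 < d + d := by omega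
    have e := congrFun key ⟨0, hj⟩
    have hlhs : extv pl ((M.det • w) ⟨0, hj⟩) = 0 := by
      have : (M.det • w) ⟨0, hj⟩ = M.det * (x ^ 0 * y ^ (d + d - 1 - 0)) := rfl
      rw [this, pow_zero, one_mul, extv_mul, hdet, extv_pow_zero pl h0, add_zero]
    calc min (extv pl F) (extv pl G)
        ≤ extv pl ((M.adjugate).mulVec (M.mulVec w) ⟨0, hj⟩) := hrhs _
      _ = extv pl ((M.det • w) ⟨0, hj⟩) := by rw [e]
      _ = 0 := hlhs

lemma pair_factor (x1 y1 x2 y2 : K) (hx1 : 0 ≤ extv pl x1) (hy1 : 0 ≤ extv pl y1)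
    (hx2 : 0 ≤ extv pl x2) (hy2 : 0 ≤ extv pl y2) (d i j : ℕ) (hi : i ≤ d) (hj : j ≤ d) :
    ∃ s : K, 0 ≤ extv pl s ∧
      x1 ^ i * y1 ^ (d - i) * (x2 ^ j * y2 ^ (d - j))
        - x2 ^ i * y2 ^ (d - i) * (x1 ^ j * y1 ^ (d - j)) = (x1 * y2 - x2 * y1) * s := by
  have main : ∀ i j : ℕ, i ≤ d → j ≤ d → j ≤ i → ∃ s : K, 0 ≤ extv pl s ∧
      x1 ^ i * y1 ^ (d - i) * (x2 ^ j * y2 ^ (d - j))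
        - x2 ^ i * y2 ^ (d - i) * (x1 ^ j * y1 ^ (d - j)) = (x1 * y2 - x2 * y1) * s := by
    intro i j hi hj hji
    set k := i - j with hk
    refine ⟨(x1 ^ j * x2 ^ j * y1 ^ (d - i) * y2 ^ (d - i)) *
      (∑ m ∈ Finset.range k, (x1 * y2) ^ m * (x2 * y1) ^ (k - 1 - m)), ?_, ?_⟩
    · rw [extv_mul]
      refine add_nonneg ?_ ?_
      · rw [extv_mul, extv_mul, extv_mul]
        exact add_nonneg (add_nonneg (add_nonneg (extv_pow_nonneg pl hx1 _)
          (extv_pow_nonneg pl hx2 _)) (extv_pow_nonneg pl hy1 _)) (extv_pow_nonneg pl hy2 _)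
      · apply extv_sum_le
        intro m _
        rw [extv_mul]
        refine add_nonneg (extv_pow_nonneg pl ?_ _) (extv_pow_nonneg pl ?_ _) <;>
          · rw [extv_mul]; exact add_nonneg (by assumption) (by assumption)
    · have e1 : x1 ^ i = x1 ^ j * x1 ^ k := by rw [← pow_add]; congr 1; omega
      have e2 : x2 ^ i = x2 ^ j * x2 ^ k := by rw [← pow_add]; congr 1; omega
      have e3 : y2 ^ (d - j) = y2 ^ (d - i) * y2 ^ k := by rw [← pow_add]; congr 1; omega
      have e4 : y1 ^ (d - j) = y1 ^ (d - i) * y1 ^ k := by rw [← pow_add]; congr 1; omega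
      rw [e1, e2, e3, e4]
      have hgeom := geom_sum₂_mul (x1 * y2) (x2 * y1) k
      have hrhs : (x1 * y2 - x2 * y1) * ((x1 ^ j * x2 ^ j * y1 ^ (d - i) * y2 ^ (d - i)) *
          (∑ m ∈ Finset.range k, (x1 * y2) ^ m * (x2 * y1) ^ (k - 1 - m))) =
          (x1 ^ j * x2 ^ j * y1 ^ (d - i) * y2 ^ (d - i)) *
          ((∑ m ∈ Finset.range k, (x1 * y2) ^ m * (x2 * y1) ^ (k - 1 - m)) *
            (x1 * y2 - x2 * y1)) := by ring
      rw [hrhs, hgeom, mul_pow, mul_pow]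
      ring
  rcases le_total j i with hji | hij
  · exact main i j hi hj hji
  · obtain ⟨s, hs, heq⟩ := main j i hj hi hij
    refine ⟨-s, by rw [extv_neg]; exact hs, ?_⟩
    have : x1 ^ i * y1 ^ (d - i) * (x2 ^ j * y2 ^ (d - j))
        - x2 ^ i * y2 ^ (d - i) * (x1 ^ j * y1 ^ (d - j)) =
        -(x1 ^ j * y1 ^ (d - j) * (x2 ^ i * y2 ^ (d - i))
        - x2 ^ j * y2 ^ (d - j) * (x1 ^ i * y1 ^ (d - i))) := by ring
    rw [this, heq]
    ring

lemma cross_le (d : ℕ) (a b : Fin (d + 1) → K)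
    (ha : ∀ i, 0 ≤ pl.v (a i)) (hb : ∀ i, 0 ≤ pl.v (b i))
    {x1 y1 x2 y2 : K} (hx1 : 0 ≤ extv pl x1) (hy1 : 0 ≤ extv pl y1)
    (hx2 : 0 ≤ extv pl x2) (hy2 : 0 ≤ extv pl y2) :
    extv pl (x1 * y2 - x2 * y1) ≤
      extv pl (formEval d a x1 y1 * formEval d b x2 y2
        - formEval d a x2 y2 * formEval d b x1 y1) := by
  have expand : formEval d a x1 y1 * formEval d b x2 y2
      - formEval d a x2 y2 * formEval d b x1 y1 =
      ∑ i : Fin (d + 1), ∑ j : Fin (d + 1), (a i * b j) *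
        (x1 ^ (i : ℕ) * y1 ^ (d - (i : ℕ)) * (x2 ^ (j : ℕ) * y2 ^ (d - (j : ℕ)))
          - x2 ^ (i : ℕ) * y2 ^ (d - (i : ℕ)) * (x1 ^ (j : ℕ) * y1 ^ (d - (j : ℕ)))) := by
    rw [formEval, formEval, formEval, formEval, Finset.sum_mul_sum, Finset.sum_mul_sum,
      ← Finset.sum_sub_distrib]
    apply Finset.sum_congr rfl
    intro i _
    rw [← Finset.sum_sub_distrib]
    apply Finset.sum_congr rfl
    intro j _
    ring
  rw [expand]
  apply extv_sum_le
  intro i _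
  apply extv_sum_le
  intro j _
  obtain ⟨s, hs, heq⟩ := pair_factor pl x1 y1 x2 y2 hx1 hy1 hx2 hy2 d (i : ℕ) (j : ℕ)
    (Nat.lt_succ_iff.1 i.isLt) (Nat.lt_succ_iff.1 j.isLt)
  rw [heq, extv_mul pl (a i * b j) ((x1 * y2 - x2 * y1) * s),
    extv_mul pl (x1 * y2 - x2 * y1) s]
  have hab : 0 ≤ extv pl (a i * b j) := by
    rw [extv_mul]
    exact add_nonneg (extv_nonneg pl (ha i)) (extv_nonneg pl (hb j))
  calc extv pl (x1 * y2 - x2 * y1)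
      ≤ extv pl (x1 * y2 - x2 * y1) + extv pl s := le_add_of_nonneg_right hs
    _ ≤ extv pl (a i * b j) + (extv pl (x1 * y2 - x2 * y1) + extv pl s) :=
        le_add_of_nonneg_left hab

lemma vmin_zero_of (F G : K) (hFG : ¬(F = 0 ∧ G = 0)) (hF : 0 ≤ extv pl F)
    (hG : 0 ≤ extv pl G) (hmin : min (extv pl F) (extv pl G) ≤ 0) :
    vminVec pl ![F, G] = 0 := by
  have hcoe := vminVec_coe pl (u := ![F, G]) (by simpa using hFG)
  simp only [Matrix.cons_val_zero, Matrix.cons_val_one, Matrix.head_cons] at hcoe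
  have : ((vminVec pl ![F, G] : ℤ) : WithTop ℤ) = 0 := by
    rw [hcoe]
    exact le_antisymm hmin (le_min hF hG)
  exact_mod_cast this

lemma logDist_le_apply {φ : P1 K → P1 K} (hg : GoodReduction pl φ) (P Q : P1 K) :
    logDist pl P Q ≤ logDist pl (φ P) (φ Q) := by
  obtain ⟨d, a, b, ⟨hresne, hlift⟩, ha, hb, hres⟩ := hg
  obtain ⟨x1, y1, h1, hP1, hm1⟩ := exists_norm pl P
  obtain ⟨x2, y2, h2, hP2, hm2⟩ := exists_norm pl Q
  obtain ⟨hF1, hφ1⟩ := hlift x1 y1 h1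
  obtain ⟨hF2, hφ2⟩ := hlift x2 y2 h2
  rcases Nat.eq_zero_or_pos d with hd | hd
  · subst hd
    have c1 : ∀ x y : K, formEval 0 a x y = a 0 := by
      intro x y; simp [formEval]
    have c2 : ∀ x y : K, formEval 0 b x y = b 0 := by
      intro x y; simp [formEval]
    have hPQ : φ P = φ Q := by
      rw [hP1, hP2, hφ1, hφ2]
      rw [P1.mk_eq_mk, P1.mk_eq_mk, Projectivization.mk_eq_mk_iff']
      exact ⟨1, by rw [one_smul, c1, c1, c2, c2]⟩
    rw [hPQ, logDist_self]
    exact le_top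
  · obtain ⟨hx1, hy1, he1⟩ := norm_unpack pl h1 hm1
    obtain ⟨hx2, hy2, he2⟩ := norm_unpack pl h2 hm2
    have hmin1 := res_min_le pl d hd a b ha hb hresne hres hx1 hy1 he1
    have hmin2 := res_min_le pl d hd a b ha hb hresne hres hx2 hy2 he2
    have hv1 : vminVec pl ![formEval d a x1 y1, formEval d b x1 y1] = 0 :=
      vmin_zero_of pl _ _ hF1 (formEval_nonneg pl d a ha hx1 hy1)
        (formEval_nonneg pl d b hb hx1 hy1) hmin1
    have hv2 : vminVec pl ![formEval d a x2 y2, formEval d b x2 y2] = 0 :=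
      vmin_zero_of pl _ _ hF2 (formEval_nonneg pl d a ha hx2 hy2)
        (formEval_nonneg pl d b hb hx2 hy2) hmin2
    rw [hP1, hP2, hφ1, hφ2, logDist_mk, logDist_mk, Dd_norm pl hm1 hm2, Dd_norm pl hv1 hv2]
    simp only [Matrix.cons_val_zero, Matrix.cons_val_one, Matrix.head_cons]
    exact cross_le pl d a b ha hb hx1 hy1 hx2 hy2

lemma logDist_triangle (P Q R : P1 K) :
    min (logDist pl P Q) (logDist pl Q R) ≤ logDist pl P R := by
  obtain ⟨x1, y1, h1, hP1, hm1⟩ := exists_norm pl P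
  obtain ⟨x2, y2, h2, hP2, hm2⟩ := exists_norm pl Q
  obtain ⟨x3, y3, h3, hP3, hm3⟩ := exists_norm pl R
  obtain ⟨hx1, hy1, _⟩ := norm_unpack pl h1 hm1
  obtain ⟨hx2, hy2, he2⟩ := norm_unpack pl h2 hm2
  obtain ⟨hx3, hy3, _⟩ := norm_unpack pl h3 hm3
  rw [hP1, hP2, hP3, logDist_mk, logDist_mk, logDist_mk, Dd_norm pl hm1 hm2,
    Dd_norm pl hm2 hm3, Dd_norm pl hm1 hm3]
  simp only [Matrix.cons_val_zero, Matrix.cons_val_one, Matrix.head_cons]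
  rcases he2 with h0 | h0
  · have hid : x2 * (x1 * y3 - x3 * y1) =
        x3 * (x1 * y2 - x2 * y1) + x1 * (x2 * y3 - x3 * y2) := by ring
    have hL : extv pl (x1 * y3 - x3 * y1) = extv pl (x2 * (x1 * y3 - x3 * y1)) := by
      rw [extv_mul, h0, zero_add]
    rw [hL, hid]
    refine le_trans (le_min ?_ ?_) (extv_min_le_add pl _ _)
    · refine le_trans (min_le_left _ _) ?_
      rw [extv_mul]
      exact le_add_of_nonneg_left hx3
    · refine le_trans (min_le_right _ _) ?_
      rw [extv_mul]
      exact le_add_of_nonneg_left hx1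
  · have hid : y2 * (x1 * y3 - x3 * y1) =
        y3 * (x1 * y2 - x2 * y1) + y1 * (x2 * y3 - x3 * y2) := by ring
    have hL : extv pl (x1 * y3 - x3 * y1) = extv pl (y2 * (x1 * y3 - x3 * y1)) := by
      rw [extv_mul, h0, zero_add]
    rw [hL, hid]
    refine le_trans (le_min ?_ ?_) (extv_min_le_add pl _ _)
    · refine le_trans (min_le_left _ _) ?_
      rw [extv_mul]
      exact le_add_of_nonneg_left hy3
    · refine le_trans (min_le_right _ _) ?_
      rw [extv_mul]
      exact le_add_of_nonneg_left hy1

end Aux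

/-- Proposition 6.1 of Morton–Silverman.  Let `K` be a global field,
`𝔭` a non-archimedean place of `K`, `φ : ℙ¹ → ℙ¹` a morphism defined over `K` with good
reduction at `𝔭`, and `P ∈ ℙ¹(K)` a periodic point of minimal period `n`.  Then
(i) `δ_𝔭(φ^i(P), φ^j(P)) = δ_𝔭(φ^(i+k)(P), φ^(j+k)(P))` for all `i, j, k ∈ ℕ`; and
(ii) `δ_𝔭(φ^i(P), φ^j(P)) = δ_𝔭(φ(P), P)` whenever `gcd(i - j, n) = 1`. -/
theorem stmt18 (K : Type) [Field K] (hK : IsGlobalField K) (pl : Place K)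
    (φ : P1 K → P1 K) (hφ : IsEndo φ) (hgood : GoodReduction pl φ)
    (P : P1 K) (hP : PeriodicPt φ P)
    (n : ℕ) (hn : n = Function.minimalPeriod φ P) :
    (∀ i j k : ℕ,
        logDist pl (φ^[i] P) (φ^[j] P) = logDist pl (φ^[i + k] P) (φ^[j + k] P)) ∧
      (∀ i j : ℕ, Int.gcd ((i : ℤ) - (j : ℤ)) (n : ℤ) = 1 →
        logDist pl (φ^[i] P) (φ^[j] P) = logDist pl (φ P) P) := by
  have hφn : φ^[n] P = P := by rw [hn]; exact Function.iterate_minimalPeriod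
  have hφn' : Function.IsPeriodicPt φ n P := hφn
  have hn1 : 1 ≤ n := by
    rw [hn]
    refine Function.minimalPeriod_pos_of_mem_periodicPts ?_
    obtain ⟨m, hm0, hm⟩ := hP
    exact ⟨m, hm0, hm⟩
  have step : ∀ i j : ℕ,
      logDist pl (φ^[i] P) (φ^[j] P) ≤ logDist pl (φ^[i + 1] P) (φ^[j + 1] P) := by
    intro i j
    rw [Function.iterate_succ_apply' φ i P, Function.iterate_succ_apply' φ j P]
    exact logDist_le_apply pl hgood _ _
  have mono2 : ∀ i j : ℕ, Monotone (fun k => logDist pl (φ^[i + k] P) (φ^[j + k] P)) := by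
    intro i j
    apply monotone_nat_of_le_succ
    intro k
    have h := step (i + k) (j + k)
    simpa [Nat.add_assoc] using h
  have periodic : ∀ m : ℕ, φ^[m + n] P = φ^[m] P := fun m => by
    rw [Function.iterate_add_apply, hφn]
  have cyc : ∀ i j q : ℕ,
      logDist pl (φ^[i + q * n] P) (φ^[j + q * n] P) = logDist pl (φ^[i] P) (φ^[j] P) := by
    intro i j q
    induction q with
    | zero => simp
    | succ q ih =>
        have e1 : i + (q + 1) * n = (i + q * n) + n := by ring
        have e2 : j + (q + 1) * n = (j + q * n) + n := by ring
        rw [e1, e2, periodic, periodic, ih]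
  have key1 : ∀ i j k : ℕ,
      logDist pl (φ^[i] P) (φ^[j] P) = logDist pl (φ^[i + k] P) (φ^[j + k] P) := by
    intro i j k
    refine le_antisymm ?_ ?_
    · have h := mono2 i j (Nat.zero_le k)
      simpa using h
    · have hkn : k ≤ k * n := Nat.le_mul_of_pos_right k hn1
      have h1 := mono2 i j hkn
      simp only [] at h1
      rw [cyc i j k] at h1
      exact h1
  have edgeg : ∀ s k : ℕ, logDist pl (φ^[s + k] P) (φ^[k] P) = logDist pl (φ^[s] P) P := by
    intro s k
    have h := key1 s 0 k
    rw [Nat.zero_add, Function.iterate_zero_apply] at h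
    exact h.symm
  refine ⟨key1, ?_⟩
  have main : ∀ i j : ℕ, j ≤ i → Nat.gcd (i - j) n = 1 →
      logDist pl (φ^[i] P) (φ^[j] P) = logDist pl (φ P) P := by
    intro i j hji hgcd
    set m := i - j with hm
    have e0 : logDist pl (φ^[i] P) (φ^[j] P) = logDist pl (φ^[m] P) P := by
      have h := edgeg m j
      rw [show m + j = i by omega] at h
      exact h
    rcases eq_or_lt_of_le hn1 with hn1' | hn2
    · have hall : ∀ k : ℕ, φ^[k] P = P := by
        intro k
        have h := hφn'.iterate_mod_apply k
        rw [← hn1', Nat.mod_one] at h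
        simpa using h.symm
      rw [e0, hall m, show φ P = P from by simpa using hall 1]
    · have hm1 : 1 ≤ m := by
        rcases Nat.eq_zero_or_pos m with h0 | h0
        · rw [h0, Nat.gcd_zero_left] at hgcd; omega
        · exact h0
      have claimA : ∀ m' : ℕ, 1 ≤ m' → logDist pl (φ P) P ≤ logDist pl (φ^[m'] P) P := by
        refine Nat.le_induction ?_ ?_
        · rw [Function.iterate_one]
        · intro m' hm' IH
          have tri := logDist_triangle pl (φ^[m' + 1] P) (φ^[m'] P) P
          have e : logDist pl (φ^[m' + 1] P) (φ^[m'] P) = logDist pl (φ P) P := by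
            have h := edgeg 1 m'
            rw [Nat.add_comm 1 m', Function.iterate_one] at h
            exact h
          exact le_trans (le_min e.ge IH) tri
      have claimB : ∀ t : ℕ, 1 ≤ t →
          logDist pl (φ^[m] P) P ≤ logDist pl (φ^[t * m] P) P := by
        refine Nat.le_induction ?_ ?_
        · rw [Nat.one_mul]
        · intro t ht IH
          have tri := logDist_triangle pl (φ^[(t + 1) * m] P) (φ^[t * m] P) P
          have e : logDist pl (φ^[(t + 1) * m] P) (φ^[t * m] P) = logDist pl (φ^[m] P) P := by
            have h := edgeg m (t * m)
            rw [show m + t * m = (t + 1) * m by ring] at h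
            exact h
          exact le_trans (le_min e.ge IH) tri
      obtain ⟨t, -, ht⟩ := Nat.exists_mul_mod_eq_one_of_coprime
        (show Nat.Coprime m n from hgcd) hn2
      have ht1 : 1 ≤ t := by
        rcases Nat.eq_zero_or_pos t with h0 | h0
        · rw [h0, Nat.mul_zero, Nat.zero_mod] at ht; omega
        · exact h0
      have hit : φ^[t * m] P = φ P := by
        have h := hφn'.iterate_mod_apply (t * m)
        rw [show t * m % n = 1 from by rw [Nat.mul_comm]; exact ht] at h
        rw [← h, Function.iterate_one]
      have le1 := claimB t ht1
      rw [hit] at le1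
      rw [e0]
      exact le_antisymm le1 (claimA m hm1)
  intro i j hij
  have hgcd' : Nat.gcd ((i : ℤ) - j).natAbs n = 1 := by
    simpa [Int.gcd] using hij
  rcases le_total j i with hji | hij2
  · have habs : ((i : ℤ) - j).natAbs = i - j := by omega
    rw [habs] at hgcd'
    exact main i j hji hgcd'
  · have habs : ((i : ℤ) - j).natAbs = j - i := by omega
    rw [habs] at hgcd'
    rw [logDist_comm pl (φ^[i] P) (φ^[j] P)]
    exact main j i hij2 hgcd'

end ArxivPreper
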